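/- Neutrality (A6) for aggregative semantics: let (𝒜, ℛ, 𝒮, w) be a QBAF and Deg a function satisfying the aggregative recurrence for (φ_R, φ_S, φ_f). Assume 0 is a neutral element of φ_R and of φ_S, i.e. φ_R(M + ⟦0⟧) = φ_R(M) and φ_S(M + ⟦0⟧) = φ_S(M) for every finite multiset M of reals. Let a, b, x ∈ 𝒜 be arguments such that w(a) = w(b), Deg(x) = 0, Att(a) ⊆ Att(b), Supp(a) ⊆ Supp(b), and Att(b) ∪ Supp(b) = Att(a) ∪ Supp(a) ∪ {x}. Then Deg(a) = Deg(b). -/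

import Mathlib

open scoped Classical

/-- The finset of parents of `a` for a relation `Rel` (`b` is a parent of `a`
when `Rel b a` holds, i.e. `(b, a)` is in the relation). -/
noncomputable def parentSet {α : Type*} [Fintype α] (Rel : α → α → Prop) (a : α) :
    Finset α :=
  Finset.univ.filter (fun b => Rel b a)

/-- The multiset of `Deg`-values of the parents of `a`. -/
noncomputable def parentVals {α : Type*} [Fintype α] (Rel : α → α → Prop)
    (Deg : α → ℝ) (a : α) : Multiset ℝ :=
  (parentSet Rel a).val.map Deg

/-- `Deg` satisfies the aggregative recurrence for `(φR, φS, φf)` on the QBAF with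
attack relation `R`, support relation `S` and weight function `w`. -/
def AggRec {α : Type*} [Fintype α] (R S : α → α → Prop) (w : α → ℝ)
    (φR φS : Multiset ℝ → ℝ) (φf : ℝ → ℝ → ℝ → ℝ) (Deg : α → ℝ) : Prop :=
  ∀ a : α, Deg a = φf (φR (parentVals R Deg a)) (φS (parentVals S Deg a)) (w a)

/-- Neutrality (A6) for aggregative semantics. -/
theorem statement6 {α : Type*} [Fintype α]
    (R S : α → α → Prop) (w : α → ℝ)
    (hRS : ∀ u v : α, ¬ (R u v ∧ S u v))
    (hw : ∀ u : α, w u ∈ Set.Icc (0 : ℝ) 1)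
    (φR φS : Multiset ℝ → ℝ) (φf : ℝ → ℝ → ℝ → ℝ)
    (hneutR : ∀ M : Multiset ℝ, φR (0 ::ₘ M) = φR M)
    (hneutS : ∀ M : Multiset ℝ, φS (0 ::ₘ M) = φS M)
    (Deg : α → ℝ)
    (hDeg : AggRec R S w φR φS φf Deg)
    (a b x : α)
    (hwab : w a = w b)
    (hx : Deg x = 0)
    (hAtt : parentSet R a ⊆ parentSet R b)
    (hSupp : parentSet S a ⊆ parentSet S b)
    (hU : parentSet R b ∪ parentSet S b = parentSet R a ∪ parentSet S a ∪ {x}) :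
    Deg a = Deg b := by
  classical
  have hmem : ∀ (Rel : α → α → Prop) (u v : α), u ∈ parentSet Rel v ↔ Rel u v := by
    intro Rel u v; simp [parentSet]
  -- disjointness of parent sets of b
  have hdisj : ∀ y : α, ¬ (y ∈ parentSet R b ∧ y ∈ parentSet S b) := by
    intro y hy
    exact hRS y b ⟨(hmem R y b).1 hy.1, (hmem S y b).1 hy.2⟩
  -- membership version of hU
  have hUm : ∀ y : α, (y ∈ parentSet R b ∨ y ∈ parentSet S b) ↔
      (y ∈ parentSet R a ∨ y ∈ parentSet S a ∨ y = x) := by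
    intro y
    have := Finset.ext_iff.mp hU y
    simp only [Finset.mem_union, Finset.mem_singleton, or_assoc] at this; exact this
  -- Rb ⊆ Ra ∪ {x}
  have hRb : ∀ y ∈ parentSet R b, y ∈ parentSet R a ∨ y = x := by
    intro y hy
    rcases (hUm y).1 (Or.inl hy) with h | h | h
    · exact Or.inl h
    · exact absurd ⟨hy, hSupp h⟩ (hdisj y)
    · exact Or.inr h
  have hSb : ∀ y ∈ parentSet S b, y ∈ parentSet S a ∨ y = x := by
    intro y hy
    rcases (hUm y).1 (Or.inr hy) with h | h | h
    · exact absurd ⟨hAtt h, hy⟩ (hdisj y)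
    · exact Or.inl h
    · exact Or.inr h
  -- goal reduces to equality of the φ values
  rw [hDeg a, hDeg b, hwab]
  -- key: it suffices that the φ-arguments agree
  suffices h : φR (parentVals R Deg a) = φR (parentVals R Deg b) ∧
      φS (parentVals S Deg a) = φS (parentVals S Deg b) by
    rw [h.1, h.2]
  -- case on where x lives
  by_cases hxRa : x ∈ parentSet R a
  · -- then Rb = Ra and Sb = Sa
    have hRe : parentSet R b = parentSet R a := by
      apply Finset.Subset.antisymm _ hAtt
      intro y hy
      rcases hRb y hy with h | h
      · exact h
      · exact h ▸ hxRa
    have hSe : parentSet S b = parentSet S a := by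
      apply Finset.Subset.antisymm _ hSupp
      intro y hy
      rcases hSb y hy with h | h
      · exact h
      · exact absurd ⟨hAtt (h ▸ hxRa), hy⟩ (hdisj y)
    constructor <;> simp [parentVals, hRe, hSe]
  · by_cases hxSa : x ∈ parentSet S a
    · have hSe : parentSet S b = parentSet S a := by
        apply Finset.Subset.antisymm _ hSupp
        intro y hy
        rcases hSb y hy with h | h
        · exact h
        · exact h ▸ hxSa
      have hRe : parentSet R b = parentSet R a := by
        apply Finset.Subset.antisymm _ hAtt
        intro y hy
        rcases hRb y hy with h | h
        · exact h
        · exact absurd ⟨hy, hSupp (h ▸ hxSa)⟩ (hdisj y)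
      constructor <;> simp [parentVals, hRe, hSe]
    · -- x is a fresh parent of b, attacker or supporter
      have hxb : x ∈ parentSet R b ∨ x ∈ parentSet S b :=
        (hUm x).2 (Or.inr (Or.inr rfl))
      rcases hxb with hxb | hxb
      · -- Rb = insert x Ra, Sb = Sa
        have hRe : parentSet R b = insert x (parentSet R a) := by
          apply Finset.Subset.antisymm
          · intro y hy
            rcases hRb y hy with h | h
            · exact Finset.mem_insert_of_mem h
            · subst h; exact Finset.mem_insert_self _ _
          · intro y hy
            rcases Finset.mem_insert.mp hy with h | h
            · exact h ▸ hxb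
            · exact hAtt h
        have hSe : parentSet S b = parentSet S a := by
          apply Finset.Subset.antisymm _ hSupp
          intro y hy
          rcases hSb y hy with h | h
          · exact h
          · subst h; exact absurd ⟨hxb, hy⟩ (hdisj y)
        have hval : (parentSet R b).val = x ::ₘ (parentSet R a).val := by
          rw [hRe, Finset.insert_val_of_notMem hxRa]
        constructor
        · rw [parentVals, parentVals, hval, Multiset.map_cons, hx, hneutR]
        · simp [parentVals, hSe]
      · have hSe : parentSet S b = insert x (parentSet S a) := by
          apply Finset.Subset.antisymm
          · intro y hy
            rcases hSb y hy with h | h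
            · exact Finset.mem_insert_of_mem h
            · subst h; exact Finset.mem_insert_self _ _
          · intro y hy
            rcases Finset.mem_insert.mp hy with h | h
            · exact h ▸ hxb
            · exact hSupp h
        have hRe : parentSet R b = parentSet R a := by
          apply Finset.Subset.antisymm _ hAtt
          intro y hy
          rcases hRb y hy with h | h
          · exact h
          · exact absurd ⟨hy, h ▸ hxb⟩ (hdisj y)
        have hval : (parentSet S b).val = x ::ₘ (parentSet S a).val := by
          rw [hSe, Finset.insert_val_of_notMem hxSa]
        constructor
        · simp [parentVals, hRe]
        · rw [parentVals, parentVals, hval, Multiset.map_cons, hx, hneutS]
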